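/- arXiv:2308.05229 — 3 statements merged into one kernel-verified Lean document; each statement's English description precedes it below -/
import Mathlib

section
/- Suppose an additive quaternary [n,k,d]_4 code exists with n - d = s and d > 0. Applying the Griesmer bound to the concatenated binary linear [3n, 2k, 2d]_2 code yields 3s ≥ (n-s)(2^{2k-2}-1)/2^{2k-2}, and hence n/s ≤ 4 + 3/(4^{k-1}-1). -/
/-- Griesmer bound consequence for additive quaternary codes: if an additive
`[n, k, d]₄` code exists with `d = n - s > 0` (here `K = 2k ≥ 3`, so `k ≥ 1.5`),
then the concatenated binary `[3n, 2k, 2d]₂` code satisfies the Griesmer bound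
`3n ≥ Σ_{i<2k} ⌈2d/2^i⌉`, which yields `3s ≥ (n-s)(2^(2k-2)-1)/2^(2k-2)`
and hence `n/s ≤ 4 + 3/(4^(k-1)-1) = 4 + 3/(2^(2k-2)-1)`. -/
theorem griesmer_asymptotic_upper_bound (n s d K : ℕ) (hK : 3 ≤ K)
    (hd : d = n - s) (hdpos : 0 < d)
    (hgriesmer : (∑ i ∈ Finset.range K, ⌈(2 * d : ℚ) / 2 ^ i⌉) ≤ (3 * n : ℤ)) :
    ((n : ℚ) - s) * ((2:ℚ) ^ (K - 2) - 1) / (2:ℚ) ^ (K - 2) ≤ (3 * s : ℚ) ∧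
      (n : ℚ) / s ≤ 4 + 3 / ((2:ℚ) ^ (K - 2) - 1) := by
  set Q : ℚ := (2:ℚ) ^ (K - 2) with hQdef
  have hQ0 : (0:ℚ) < Q := by positivity
  have hQ2 : (2:ℚ) ≤ Q := by
    calc (2:ℚ) = 2 ^ 1 := by norm_num
    _ ≤ 2 ^ (K - 2) := by
      apply pow_le_pow_right₀ (by norm_num)
      omega
  have hsn : s < n := by omega
  have hsn' : s ≤ n := le_of_lt hsn
  have hdq : (d:ℚ) = (n:ℚ) - s := by
    rw [hd]
    push_cast [Nat.cast_sub hsn']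
    ring
  -- rationalize the Griesmer bound
  have h1 : (∑ i ∈ Finset.range K, (2 * d : ℚ) / 2 ^ i) ≤ (3 * n : ℚ) := by
    calc (∑ i ∈ Finset.range K, (2 * d : ℚ) / 2 ^ i)
        ≤ ∑ i ∈ Finset.range K, ((⌈(2 * d : ℚ) / 2 ^ i⌉ : ℤ) : ℚ) :=
          Finset.sum_le_sum fun i _ => Int.le_ceil _
      _ = ((∑ i ∈ Finset.range K, ⌈(2 * d : ℚ) / 2 ^ i⌉ : ℤ) : ℚ) := by push_cast; ring
      _ ≤ ((3 * n : ℤ) : ℚ) := by exact_mod_cast hgriesmer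
      _ = (3 * n : ℚ) := by push_cast; ring
  have h2K : (2:ℚ) ^ K ≠ 0 := by positivity
  have hsum : (∑ i ∈ Finset.range K, (2 * d : ℚ) / 2 ^ i)
      = 4 * d - 4 * d / 2 ^ K := by
    simp_rw [div_eq_mul_inv, ← inv_pow]
    rw [← Finset.mul_sum, geom_sum_eq (by norm_num : (2:ℚ)⁻¹ ≠ 1)]
    field_simp
    ring
  have hKQ : (2:ℚ) ^ K = 4 * Q := by
    have h2 : 2 + (K - 2) = K := by omega
    calc (2:ℚ) ^ K = 2 ^ (2 + (K - 2)) := by rw [h2]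
    _ = 2 ^ 2 * 2 ^ (K - 2) := pow_add 2 2 (K - 2)
    _ = 4 * Q := by norm_num [hQdef]
  have h2 : 4 * (d:ℚ) - (d:ℚ) / Q ≤ 3 * n := by
    rw [hsum, hKQ] at h1
    have : 4 * (d:ℚ) / (4 * Q) = (d:ℚ) / Q := by
      field_simp
    linarith [h1, this]
  have hdQ : (d:ℚ) / Q * Q = d := div_mul_cancel₀ _ (ne_of_gt hQ0)
  have h3 : (d:ℚ) - d / Q ≤ 3 * s := by
    have : (n:ℚ) = d + s := by linarith [hdq]
    linarith [h2]
  have key : ((n:ℚ) - s) * (Q - 1) ≤ 3 * s * Q := by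
    rw [← hdq]
    nlinarith [mul_le_mul_of_nonneg_right h3 hQ0.le, hdQ]
  constructor
  · rw [div_le_iff₀ hQ0]
    linarith [key]
  · have hQ1 : (0:ℚ) < Q - 1 := by linarith
    rcases Nat.eq_zero_or_pos s with hs | hs
    · subst hs
      simp only [Nat.cast_zero, div_zero]
      have h3 : (0:ℚ) ≤ 3 / (Q - 1) := by positivity
      linarith
    · have hsq : (0:ℚ) < s := by exact_mod_cast hs
      rw [div_le_iff₀ hsq]
      have hn1 : (n:ℚ) * (Q - 1) ≤ s * (4 * Q - 1) := by nlinarith [key]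
      have hrhs : (4 + 3 / (Q - 1)) * s = s * (4 * Q - 1) / (Q - 1) := by
        field_simp
        ring
      rw [hrhs, le_div_iff₀ hQ1]
      nlinarith [hn1]
end

section
/- For every odd integer l ≥ 3, the projective space PG(l-1,2) admits a 3-cover by lines: a multiset of lines such that every point lies on exactly 3 lines of the multiset. -/
open Module

attribute [local instance] Classical.propDecidable

/-- Auxiliary: if a finite `F₂`-module has a linear automorphism with no nonzero
fixed points, then the multiset of lines `span {x, T x}` over all nonzero `x`
is a 3-cover. -/
theorem aux_three_cover {V : Type*} [AddCommGroup V] [Module (ZMod 2) V]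
    [Fintype V] [Module.Finite (ZMod 2) V]
    (T : V ≃ₗ[ZMod 2] V) (hT : ∀ x : V, T x = x → x = 0) :
    ∃ M : Multiset (Submodule (ZMod 2) V),
      (∀ W ∈ M, finrank (ZMod 2) W = 2) ∧
      ∀ P : Submodule (ZMod 2) V,
        finrank (ZMod 2) P = 1 → (M.filter fun W => P ≤ W).card = 3 := by
  classical
  have h2 : ∀ a : ZMod 2, a = 0 ∨ a = 1 := by decide
  -- every element of V is its own negative
  have hadd : ∀ x : V, x + x = 0 := by
    intro x
    have : (2 : ZMod 2) • x = 0 := by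
      rw [show (2 : ZMod 2) = 0 by decide, zero_smul]
    rwa [two_smul] at this
  -- T x ≠ 0 for x ≠ 0
  have hT0 : ∀ x : V, x ≠ 0 → T x ≠ 0 := fun x hx h =>
    hx (by simpa using T.injective (h.trans (map_zero T).symm))
  have hTne : ∀ x : V, x ≠ 0 → T x ≠ x := fun x hx h => hx (hT x h)
  -- the map x + T x is a linear equivalence
  have hneg : ∀ x : V, -x = x := fun x => (neg_eq_of_add_eq_zero_left (hadd x))
  have hEinj : Function.Injective (LinearMap.id (R := ZMod 2) (M := V) + T.toLinearMap) := by
    intro x y hxy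
    simp only [LinearMap.add_apply, LinearMap.id_apply, LinearEquiv.coe_coe] at hxy
    have hz : (x - y) + T (x - y) = 0 := by
      rw [map_sub, sub_add_sub_comm, hxy, sub_self]
    have hfix : T (x - y) = x - y := by
      have h' : T (x - y) = -(x - y) := eq_neg_of_add_eq_zero_right hz
      rw [h', hneg]
    have := hT _ hfix
    exact sub_eq_zero.mp this
  have hEbij : Function.Bijective (LinearMap.id (R := ZMod 2) (M := V) + T.toLinearMap) :=
    (Finite.injective_iff_bijective).mp hEinj
  set E : V ≃ₗ[ZMod 2] V := LinearEquiv.ofBijective _ hEbij with hE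
  have hEapp : ∀ x : V, E x = x + T x := by
    intro x
    simp [hE, LinearEquiv.ofBijective_apply]
  -- the multiset of lines
  set f : V → Submodule (ZMod 2) V := fun x => Submodule.span (ZMod 2) {x, T x} with hf
  set s : Multiset V := (Finset.univ.filter fun x : V => x ≠ 0).val with hs
  refine ⟨s.map f, ?_, ?_⟩
  · -- each line has dimension 2
    intro W hW
    obtain ⟨x, hx, rfl⟩ := Multiset.mem_map.mp hW
    have hx0 : x ≠ 0 := by
      have := Finset.mem_filter.mp (by exact hx)
      exact this.2
    have hli : LinearIndependent (ZMod 2) ![x, T x] := by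
      rw [LinearIndependent.pair_iff' hx0]
      intro a ha
      rcases h2 a with rfl | rfl
      · rw [zero_smul] at ha; exact hT0 x hx0 ha.symm
      · rw [one_smul] at ha; exact hTne x hx0 ha.symm
    have hrange : Set.range ![x, T x] = {x, T x} := by
      simp only [Matrix.range_cons, Matrix.range_empty, Set.union_empty,
        Set.union_singleton, Set.singleton_union]
      first
      | rfl
      | exact Set.pair_comm _ _
    have := finrank_span_eq_card (R := ZMod 2) hli
    rw [hrange] at this
    simpa using this
  · -- each point lies on exactly 3 lines
    intro P hP
    -- extract a nonzero generator of P
    have hPrank : Module.rank (ZMod 2) P = 1 := by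
      have := Module.finrank_eq_rank (ZMod 2) P
      rw [hP] at this
      exact_mod_cast this.symm
    obtain ⟨v, hvP, hv0, hvle⟩ := (rank_submodule_eq_one_iff P).mp hPrank
    -- P ≤ W ↔ v ∈ W
    have hPle : ∀ W : Submodule (ZMod 2) V, P ≤ W ↔ v ∈ W := by
      intro W
      constructor
      · exact fun h => h hvP
      · intro hvW
        exact le_trans hvle ((Submodule.span_singleton_le_iff_mem v W).mpr hvW)
    -- membership in a line
    have hmem : ∀ x : V, v ∈ f x ↔ (v = x ∨ v = T x ∨ v = x + T x) := by
      intro x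
      rw [hf]
      simp only []
      rw [Submodule.mem_span_pair]
      constructor
      · rintro ⟨a, b, hab⟩
        rcases h2 a with rfl | rfl <;> rcases h2 b with rfl | rfl <;>
          simp only [zero_smul, one_smul, zero_add, add_zero] at hab
        · exact absurd hab.symm hv0
        · exact Or.inr (Or.inl hab.symm)
        · exact Or.inl hab.symm
        · exact Or.inr (Or.inr hab.symm)
      · rintro (rfl | rfl | rfl)
        · exact ⟨1, 0, by simp⟩
        · exact ⟨0, 1, by simp⟩
        · exact ⟨1, 1, by simp⟩
    -- the relevant finset of x's
    have key : (Finset.univ.filter fun x : V => x ≠ 0 ∧ v ∈ f x)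
        = {v, T.symm v, E.symm v} := by
      ext x
      simp only [Finset.mem_filter, Finset.mem_univ, true_and, Finset.mem_insert,
        Finset.mem_singleton]
      rw [hmem x]
      constructor
      · rintro ⟨hx0, rfl | hv | hv⟩
        · exact Or.inl rfl
        · refine Or.inr (Or.inl ?_)
          rw [hv]; exact (T.symm_apply_apply x).symm
        · refine Or.inr (Or.inr ?_)
          have : E x = v := by rw [hEapp, hv]
          rw [← this]; exact (E.symm_apply_apply x).symm
      · rintro (rfl | rfl | rfl)
        · exact ⟨hv0, Or.inl rfl⟩
        · refine ⟨fun h => hv0 (by rw [← T.apply_symm_apply v, h, map_zero]), ?_⟩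
          exact Or.inr (Or.inl (T.apply_symm_apply v).symm)
        · refine ⟨fun h => hv0 (by rw [← E.apply_symm_apply v, h, map_zero]), ?_⟩
          refine Or.inr (Or.inr ?_)
          have := E.apply_symm_apply v
          rw [hEapp] at this
          exact this.symm
    -- distinctness
    have hd1 : v ≠ T.symm v := by
      intro h
      have h1 : T (T.symm v) = v := T.apply_symm_apply v
      rw [← h] at h1
      exact hv0 (hT v h1)
    have hd2 : v ≠ E.symm v := by
      intro h
      have h1 : E (E.symm v) = v := E.apply_symm_apply v
      rw [← h, hEapp] at h1
      exact hT0 v hv0 (add_eq_left.mp h1)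
    have hd3 : T.symm v ≠ E.symm v := by
      intro h
      have h1 : E (T.symm v) = v := by rw [h]; exact E.apply_symm_apply v
      rw [hEapp, T.apply_symm_apply] at h1
      have h2 : T.symm v = 0 := add_eq_right.mp h1
      have h3 : T (T.symm v) = v := T.apply_symm_apply v
      rw [h2, map_zero] at h3
      exact hv0 h3.symm
    -- compute the count
    have hcount : ((s.map f).filter fun W => P ≤ W).card = 3 := by
      have hfilt : ((s.map f).filter fun W => P ≤ W)
          = (s.filter fun x => P ≤ f x).map f := by
        rw [Multiset.filter_map]
        rfl
      rw [hfilt, Multiset.card_map]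
      have : (s.filter fun x => P ≤ f x)
          = (Finset.univ.filter fun x : V => x ≠ 0 ∧ v ∈ f x).val := by
        rw [hs]
        rw [Finset.filter_val, Multiset.filter_filter]
        congr 1
        ext x
        simp only [hPle]
        tauto
      rw [this, key]
      show ({v, T.symm v, E.symm v} : Finset V).card = 3
      rw [Finset.card_insert_of_notMem (by simp [hd1, hd2]),
        Finset.card_insert_of_notMem (by simp [hd3]), Finset.card_singleton]
    exact hcount

/-- For every odd `l ≥ 3`, the projective space `PG(l-1,2)` admits a 3-cover by
lines: a multiset of lines (2-dimensional subspaces of `F₂^l`) such that every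
point (1-dimensional subspace) lies on exactly 3 lines of the multiset, counted
with multiplicity. -/
theorem exists_three_cover (l : ℕ) (hl : 3 ≤ l) (hodd : Odd l) :
    ∃ M : Multiset (Submodule (ZMod 2) (Fin l → ZMod 2)),
      (∀ W ∈ M, finrank (ZMod 2) W = 2) ∧
      ∀ P : Submodule (ZMod 2) (Fin l → ZMod 2),
        finrank (ZMod 2) P = 1 → (M.filter fun W => P ≤ W).card = 3 := by
  classical
  have hl0 : l ≠ 0 := by omega
  -- the field with 2^l elements
  let K := GaloisField 2 l
  have hfinK : finrank (ZMod 2) K = l := GaloisField.finrank 2 hl0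
  have hfinV : finrank (ZMod 2) (Fin l → ZMod 2) = l := by
    simp [Module.finrank_pi]
  -- a linear equivalence between F₂^l and K
  have : Module.Finite (ZMod 2) K := Module.finite_of_finrank_pos (by omega)
  let e : (Fin l → ZMod 2) ≃ₗ[ZMod 2] K :=
    LinearEquiv.ofFinrankEq _ _ (hfinV.trans hfinK.symm)
  -- pick α ∈ K, α ≠ 0, α ≠ 1
  have hcard : 2 < Nat.card K := by
    rw [GaloisField.card 2 l hl0]
    calc 2 < 2 ^ 3 := by norm_num
    _ ≤ 2 ^ l := Nat.pow_le_pow_right (by norm_num) hl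
  haveI : Finite K := Nat.finite_of_card_ne_zero (by omega)
  haveI : Fintype K := Fintype.ofFinite K
  obtain ⟨α, hα0, hα1⟩ : ∃ α : K, α ≠ 0 ∧ α ≠ 1 := by
    by_contra h
    push_neg at h
    have hsub : (Finset.univ : Finset K) ⊆ {0, 1} := by
      intro x _
      rcases eq_or_ne x 0 with rfl | hx
      · simp
      · simp [h x hx]
    have := Finset.card_le_card hsub
    have h01 : ({0, 1} : Finset K).card ≤ 2 := Finset.card_insert_le _ _ |>.trans (by simp)
    have hcard' : Nat.card K = (Finset.univ : Finset K).card := by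
      rw [Nat.card_eq_fintype_card, Finset.card_univ]
    omega
  -- multiplication by α as a linear equivalence of K
  have hmulbij : Function.Bijective (LinearMap.mulLeft (ZMod 2) α) := by
    constructor
    · intro x y hxy
      simpa using mul_left_cancel₀ hα0 (by simpa [LinearMap.mulLeft_apply] using hxy)
    · intro y
      exact ⟨α⁻¹ * y, by simp [LinearMap.mulLeft_apply, ← mul_assoc, mul_inv_cancel₀ hα0]⟩
  let Tm : K ≃ₗ[ZMod 2] K := LinearEquiv.ofBijective _ hmulbij
  -- conjugate by e
  let T : (Fin l → ZMod 2) ≃ₗ[ZMod 2] (Fin l → ZMod 2) := e.trans (Tm.trans e.symm)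
  have hT : ∀ x : Fin l → ZMod 2, T x = x → x = 0 := by
    intro x hx
    have h1 : e.symm (Tm (e x)) = x := hx
    have h2 : Tm (e x) = e x := by
      have := congrArg e h1
      rwa [e.apply_symm_apply] at this
    have h3 : α * e x = e x := by
      simpa [Tm, LinearEquiv.ofBijective_apply, LinearMap.mulLeft_apply] using h2
    have h4 : (α - 1) * e x = 0 := by linear_combination h3
    have h5 : e x = 0 := by
      rcases mul_eq_zero.mp h4 with h | h
      · exact absurd (sub_eq_zero.mp h) hα1
      · exact h
    have := congrArg e.symm h5
    rwa [e.symm_apply_apply, map_zero] at this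
  exact aux_three_cover T hT
end

section
/- For odd l ≥ 3, there exists a partial spread of PG(l-1,2) whose lines partition the set of points outside a fixed Fano subplane E; the number of lines in this partial spread is (2^l - 8)/3. -/
open Module

attribute [local instance] Classical.propDecidable



section Helpers

variable {V : Type} [AddCommGroup V] [Module (ZMod 2) V]

lemma zmod2_cases (a : ZMod 2) : a = 0 ∨ a = 1 := by fin_cases a <;> [exact Or.inl rfl; exact Or.inr rfl]

lemma add_self_zmod2 (x : V) : x + x = 0 := by
  have : (2 : ZMod 2) • x = 0 := by
    have : (2 : ZMod 2) = 0 := by decide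
    rw [this, zero_smul]
  rwa [two_smul] at this

lemma mem_span_pair_zmod2 (x y v : V) :
    v ∈ Submodule.span (ZMod 2) {x, y} ↔ v = 0 ∨ v = x ∨ v = y ∨ v = x + y := by
  rw [Submodule.mem_span_pair]
  constructor
  · rintro ⟨a, b, rfl⟩
    rcases zmod2_cases a with ha | ha <;> rcases zmod2_cases b with hb | hb <;>
      subst ha <;> subst hb <;> simp
  · rintro (rfl | rfl | rfl | rfl)
    · exact ⟨0, 0, by simp⟩
    · exact ⟨1, 0, by simp⟩
    · exact ⟨0, 1, by simp⟩
    · exact ⟨1, 1, by simp⟩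

variable [FiniteDimensional (ZMod 2) V]

lemma exists_gen (P : Submodule (ZMod 2) V) (h : finrank (ZMod 2) P = 1) :
    ∃ v : V, v ≠ 0 ∧ P = Submodule.span (ZMod 2) {v} := by
  have hP : P ≠ ⊥ := by
    intro hbot
    rw [hbot, finrank_bot] at h
    omega
  obtain ⟨v, hvP, hv0⟩ := Submodule.exists_mem_ne_zero_of_ne_bot hP
  refine ⟨v, hv0, ?_⟩
  apply (Submodule.eq_of_le_of_finrank_le ((Submodule.span_singleton_le_iff_mem v P).mpr hvP) ?_).symm
  rw [h, finrank_span_singleton hv0]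

lemma exists_intermediate (E : Submodule (ZMod 2) V) (k : ℕ)
    (h1 : finrank (ZMod 2) E ≤ k) (h2 : k ≤ finrank (ZMod 2) V) :
    ∃ W : Submodule (ZMod 2) V, E ≤ W ∧ finrank (ZMod 2) W = k := by
  induction k with
  | zero => exact ⟨E, le_rfl, by omega⟩
  | succ k ih =>
    rcases Nat.lt_or_ge (finrank (ZMod 2) E) (k+1) with hlt | hge
    · obtain ⟨W, hEW, hW⟩ := ih (by omega) (by omega)
      obtain ⟨x, hx⟩ := Submodule.exists_of_finrank_lt W (by omega)
      have hxW : x ∉ W := by simpa using hx 1 one_ne_zero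
      have hx0 : x ≠ 0 := by rintro rfl; exact hxW W.zero_mem
      refine ⟨W ⊔ Submodule.span (ZMod 2) {x}, le_trans hEW le_sup_left, ?_⟩
      have hinf : W ⊓ Submodule.span (ZMod 2) {x} = ⊥ := by
        rw [eq_bot_iff]
        rintro y ⟨hyW, hyx⟩
        obtain ⟨c, rfl⟩ := Submodule.mem_span_singleton.mp hyx
        rcases eq_or_ne c 0 with rfl | hc
        · simp
        · exact absurd hyW (hx c hc)
      have := Submodule.finrank_sup_add_finrank_inf_eq W (Submodule.span (ZMod 2) {x})
      rw [hinf, finrank_bot, finrank_span_singleton hx0, hW] at this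
      omega
    · exact ⟨E, le_rfl, by omega⟩

lemma exists_sigma (l : ℕ) (hl : 3 ≤ l) (h : finrank (ZMod 2) V = l) :
    ∃ σ : V → V, Function.Bijective σ ∧ Function.Bijective (fun w => w + σ w) := by
  set K := GaloisField 2 l with hK
  have hfr : finrank (ZMod 2) K = l := GaloisField.finrank 2 (by omega)
  obtain ⟨e⟩ := FiniteDimensional.nonempty_linearEquiv_of_finrank_eq (h.trans hfr.symm)
  have hcard : Nat.card K = 2 ^ l := GaloisField.card 2 l (by omega)
  have : ∃ α : K, α ≠ 0 ∧ α ≠ 1 := by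
    by_contra hcon
    push_neg at hcon
    haveI : Fintype K := Fintype.ofFinite K
    have hsub : (Finset.univ : Finset K) ⊆ {0, 1} := by
      intro a _
      rcases eq_or_ne a 0 with rfl | ha
      · simp
      · simp [hcon a ha]
    have := Finset.card_le_card hsub
    rw [Finset.card_univ] at this
    have h2 : ({0, 1} : Finset K).card ≤ 2 := by
      simpa using Finset.card_insert_le (0 : K) {1}
    have hc : Nat.card K = Fintype.card K := Nat.card_eq_fintype_card
    have h8 : 8 ≤ 2 ^ l := by
      calc 8 = 2 ^ 3 := by norm_num
      _ ≤ 2 ^ l := Nat.pow_le_pow_right (by norm_num) hl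
    omega
  obtain ⟨α, hα0, hα1⟩ := this
  have h1α : 1 + α ≠ 0 := by
    intro hcon
    apply hα1
    have h2 : (1 : K) + 1 = 0 := by
      have hz : ((1 : ZMod 2) + 1) = 0 := by decide
      calc (1 : K) + 1 = algebraMap (ZMod 2) K 1 + algebraMap (ZMod 2) K 1 := by rw [map_one]
      _ = algebraMap (ZMod 2) K ((1 : ZMod 2) + 1) := by rw [map_add]
      _ = 0 := by rw [hz, map_zero]
    have h3 : (1 + 1) + α = 1 + 0 := by rw [add_assoc, hcon]
    rw [h2, zero_add, add_zero] at h3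
    exact h3
  refine ⟨fun w => e.symm (α * e w), ?_, ?_⟩
  · have : (fun w => e.symm (α * e w)) = e.symm ∘ (fun x => α * x) ∘ e := rfl
    rw [this]
    exact e.symm.bijective.comp ((mulLeft_bijective₀ α hα0).comp e.bijective)
  · have : (fun w => w + e.symm (α * e w)) = e.symm ∘ (fun x => (1 + α) * x) ∘ e := by
      funext w
      simp only [Function.comp_apply]
      rw [add_mul, one_mul, map_add, e.symm_apply_apply]
    rw [this]
    exact e.symm.bijective.comp ((mulLeft_bijective₀ _ h1α).comp e.bijective)

end Helpers

set_option maxHeartbeats 1000000 in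
theorem key (l : ℕ) (hl3 : 3 ≤ l) (hodd : Odd l) (V : Type) [AddCommGroup V]
    [Module (ZMod 2) V] [FiniteDimensional (ZMod 2) V]
    (hV : finrank (ZMod 2) V = l) (E : Submodule (ZMod 2) V)
    (hE : finrank (ZMod 2) E = 3) :
    ∃ S : Finset (Submodule (ZMod 2) V),
      (∀ W ∈ S, finrank (ZMod 2) W = 2) ∧
      (∀ P : Submodule (ZMod 2) V, finrank (ZMod 2) P = 1 →
        (P ≤ E → ∀ W ∈ S, ¬ P ≤ W) ∧
        (¬ P ≤ E → (S.filter fun W => P ≤ W).card = 1)) ∧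
      S.card = (2 ^ l - 8) / 3 := by
  rcases eq_or_ne l 3 with rfl | hne
  · -- base case
    have hEtop : E = ⊤ := Submodule.eq_top_of_finrank_eq (by rw [hE, hV])
    refine ⟨∅, by simp, ?_, by norm_num⟩
    intro P hP
    exact ⟨fun _ => by simp, fun hPE => absurd (hEtop ▸ le_top) hPE⟩
  · -- inductive step
    have hodd2 : l % 2 = 1 := Nat.odd_iff.mp hodd
    obtain ⟨m, rfl⟩ : ∃ m, l = m + 2 := ⟨l - 2, by omega⟩
    have hm3 : 3 ≤ m := by omega
    have hmodd : Odd m := Nat.odd_iff.mpr (by omega)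
    obtain ⟨W', hEW', hW'⟩ := exists_intermediate E m (by omega) (by omega)
    set E' := E.comap W'.subtype with hE'def
    have hE' : finrank (ZMod 2) E' = 3 := by
      rw [(Submodule.comapSubtypeEquivOfLe hEW').finrank_eq]; exact hE
    obtain ⟨S', hS'dim, hS'pts, hS'card⟩ := key m hm3 hmodd W' hW' E' hE'
    obtain ⟨D, hD⟩ := Submodule.exists_isCompl W'
    have hDdim : finrank (ZMod 2) D = 2 := by
      have h := Submodule.finrank_add_eq_of_isCompl hD
      omega
    let b : Basis (Fin 2) (ZMod 2) D := Module.finBasisOfFinrankEq (ZMod 2) D hDdim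
    obtain ⟨σ, hσ, hτ⟩ := exists_sigma m hm3 hW'
    set ρ := W'.linearProjOfIsCompl D hD with hρdef
    set π := D.linearProjOfIsCompl W' hD.symm with hπdef
    have hπ0 : ∀ v : V, π v = 0 ↔ v ∈ W' := fun v =>
      Submodule.linearProjOfIsCompl_apply_eq_zero_iff hD.symm
    have hρW : ∀ w : W', ρ (w : V) = w := fun w =>
      Submodule.linearProjOfIsCompl_apply_left hD w
    have hρD : ∀ d : D, ρ (d : V) = 0 := fun d =>
      Submodule.linearProjOfIsCompl_apply_right hD d
    have hπW : ∀ w : W', π (w : V) = 0 := fun w =>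
      Submodule.linearProjOfIsCompl_apply_right hD.symm w
    have hπD : ∀ d : D, π (d : V) = d := fun d =>
      Submodule.linearProjOfIsCompl_apply_left hD.symm d
    have hsum : ∀ v : V, ((ρ v : V) + (π v : V)) = v := fun v =>
      Submodule.projection_add_projection_eq_self hD v
    -- basis facts
    have hbne : ∀ c0 c1 : ZMod 2, c0 • b 0 + c1 • b 1 = 0 → c0 = 0 ∧ c1 = 0 := by
      intro c0 c1 hc
      have h := Fintype.linearIndependent_iff.mp b.linearIndependent ![c0, c1] ?_
      · exact ⟨h 0, h 1⟩
      · rw [Fin.sum_univ_two]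
        simpa using hc
    have hb0 : b 0 ≠ 0 := b.ne_zero 0
    have hb1 : b 1 ≠ 0 := b.ne_zero 1
    have hb01 : b 0 ≠ b 1 := by
      intro h
      have := hbne 1 1 (by rw [one_smul, one_smul, h, add_self_zmod2])
      exact one_ne_zero this.1
    have hbsum0 : b 0 + b 1 ≠ 0 := by
      intro h
      have := hbne 1 1 (by rwa [one_smul, one_smul])
      exact one_ne_zero this.1
    have hb0sum : b 0 ≠ b 0 + b 1 := by
      intro h
      apply hb1
      have h2 : b 0 + (0 : D) = b 0 + b 1 := by rw [add_zero]; exact h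
      exact (add_left_cancel h2).symm
    have hb1sum : b 1 ≠ b 0 + b 1 := by
      intro h
      apply hb0
      have h2 : (0 : D) + b 1 = b 0 + b 1 := by rw [zero_add]; exact h
      exact (add_right_cancel h2).symm
    -- the new lines
    set L : W' → Submodule (ZMod 2) V :=
      fun w => Submodule.span (ZMod 2) {(w : V) + ↑(b 0), (↑(σ w) : V) + ↑(b 1)} with hLdef
    have hmemL : ∀ (w : W') (u : V), u ∈ L w ↔
        u = 0 ∨ u = (w : V) + ↑(b 0) ∨ u = (↑(σ w) : V) + ↑(b 1) ∨
          u = ((w : V) + ↑(b 0)) + ((↑(σ w) : V) + ↑(b 1)) := fun w u =>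
      mem_span_pair_zmod2 _ _ _
    have hπx : ∀ w : W', π ((w : V) + ↑(b 0)) = b 0 := fun w => by
      rw [map_add, hπW, hπD, zero_add]
    have hπy : ∀ w : W', π ((↑(σ w) : V) + ↑(b 1)) = b 1 := fun w => by
      rw [map_add, hπW, hπD, zero_add]
    have hπz : ∀ w : W', π (((w : V) + ↑(b 0)) + ((↑(σ w) : V) + ↑(b 1))) = b 0 + b 1 :=
      fun w => by rw [map_add, hπx, hπy]
    have hρx : ∀ w : W', ρ ((w : V) + ↑(b 0)) = w := fun w => by
      rw [map_add, hρW, hρD, add_zero]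
    have hρy : ∀ w : W', ρ ((↑(σ w) : V) + ↑(b 1)) = σ w := fun w => by
      rw [map_add, hρW, hρD, add_zero]
    have hρz : ∀ w : W', ρ (((w : V) + ↑(b 0)) + ((↑(σ w) : V) + ↑(b 1))) = w + σ w :=
      fun w => by rw [map_add, hρx, hρy]
    -- no nonzero point of W' lies on a line L w
    have hnoL : ∀ v : V, v ≠ 0 → v ∈ W' → ∀ w : W', v ∉ L w := by
      intro v hv0 hvW' w hvL
      have hπv : π v = 0 := (hπ0 v).mpr hvW'
      rcases (hmemL w v).mp hvL with h | h | h | h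
      · exact hv0 h
      · exact hb0 (by rw [← hπx w, ← h, hπv])
      · exact hb1 (by rw [← hπy w, ← h, hπv])
      · exact hbsum0 (by rw [← hπz w, ← h, hπv])
    -- assemble the finset
    haveI : Finite V := Module.finite_of_finite (ZMod 2)
    haveI : Fintype W' := Fintype.ofFinite W'
    set oldS := S'.image (Submodule.map W'.subtype) with holdS
    set newS := (Finset.univ : Finset W').image L with hnewS
    have hvmap : ∀ (v : V) (W₀ : Submodule (ZMod 2) W'),
        v ∈ W₀.map W'.subtype ↔ ∃ hv : v ∈ W', (⟨v, hv⟩ : W') ∈ W₀ := by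
      intro v W₀
      constructor
      · rintro ⟨y, hy, rfl⟩
        exact ⟨y.2, hy⟩
      · rintro ⟨hv, h⟩
        exact ⟨⟨v, hv⟩, h, rfl⟩
    refine ⟨oldS ∪ newS, ?_, ?_, ?_⟩
    · -- dimensions
      intro W hW
      rcases Finset.mem_union.mp hW with hW | hW
      · obtain ⟨W₀, hW₀, rfl⟩ := Finset.mem_image.mp hW
        rw [← (Submodule.equivMapOfInjective W'.subtype W'.injective_subtype W₀).finrank_eq]
        exact hS'dim W₀ hW₀
      · obtain ⟨w, _, rfl⟩ := Finset.mem_image.mp hW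
        have hli : LinearIndependent (ZMod 2)
            ![(w : V) + ↑(b 0), (↑(σ w) : V) + ↑(b 1)] := by
          rw [linearIndependent_fin2]
          constructor
          · intro h
            simp only [Matrix.cons_val_one, Matrix.head_cons, Matrix.cons_val_zero] at h
            exact hb1 (by rw [← hπy w, h, map_zero])
          · intro a h
            simp only [Matrix.cons_val_one, Matrix.head_cons, Matrix.cons_val_zero] at h
            rcases zmod2_cases a with rfl | rfl
            · rw [zero_smul] at h
              exact hb0 (by rw [← hπx w, ← h, map_zero])
            · rw [one_smul] at h
              exact hb01 (by rw [← hπx w, ← h, hπy w])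
        have h2 : finrank (ZMod 2)
            (Submodule.span (ZMod 2)
              (Set.range ![(w : V) + ↑(b 0), (↑(σ w) : V) + ↑(b 1)])) = 2 := by
          rw [finrank_span_eq_card hli, Fintype.card_fin]
        have hr : Set.range ![(w : V) + ↑(b 0), (↑(σ w) : V) + ↑(b 1)]
            = {(w : V) + ↑(b 0), (↑(σ w) : V) + ↑(b 1)} := by
          ext u
          constructor
          · rintro ⟨i, rfl⟩
            fin_cases i <;> simp
          · rintro (rfl | rfl)
            · exact ⟨0, rfl⟩
            · exact ⟨1, rfl⟩
        rw [hr] at h2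
        exact h2
    · -- the point conditions
      intro P hP
      obtain ⟨v, hv0, rfl⟩ := exists_gen P hP
      have hle : ∀ W : Submodule (ZMod 2) V, Submodule.span (ZMod 2) {v} ≤ W ↔ v ∈ W :=
        fun W => Submodule.span_singleton_le_iff_mem v W
      constructor
      · -- points of E are on no line
        intro hPE W hW
        have hvE : v ∈ E := (hle E).mp hPE
        have hvW' : v ∈ W' := hEW' hvE
        rw [hle W]
        rcases Finset.mem_union.mp hW with hW | hW
        · obtain ⟨W₀, hW₀, rfl⟩ := Finset.mem_image.mp hW
          intro hvmem
          obtain ⟨hv', hmem⟩ := (hvmap v W₀).mp hvmem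
          have hne0 : (⟨v, hv'⟩ : W') ≠ 0 := by
            intro h
            exact hv0 (by simpa using congrArg Subtype.val h)
          have hP₀ : finrank (ZMod 2) (Submodule.span (ZMod 2) {(⟨v, hv'⟩ : W')}) = 1 :=
            finrank_span_singleton hne0
          have hP₀E' : Submodule.span (ZMod 2) {(⟨v, hv'⟩ : W')} ≤ E' :=
            (Submodule.span_singleton_le_iff_mem _ _).mpr (by simpa [hE'def] using hvE)
          exact (hS'pts _ hP₀).1 hP₀E' W₀ hW₀
            ((Submodule.span_singleton_le_iff_mem _ _).mpr hmem)
        · obtain ⟨w, _, rfl⟩ := Finset.mem_image.mp hW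
          exact hnoL v hv0 hvW' w
      · -- points outside E are on exactly one line
        intro hPE
        have hvE : v ∉ E := fun h => hPE ((hle E).mpr h)
        rw [Finset.card_eq_one]
        by_cases hvW' : v ∈ W'
        · -- the point is in W' : use the induction hypothesis
          have hne0 : (⟨v, hvW'⟩ : W') ≠ 0 := by
            intro h
            exact hv0 (by simpa using congrArg Subtype.val h)
          have hP₀ : finrank (ZMod 2) (Submodule.span (ZMod 2) {(⟨v, hvW'⟩ : W')}) = 1 :=
            finrank_span_singleton hne0
          have hP₀E' : ¬ Submodule.span (ZMod 2) {(⟨v, hvW'⟩ : W')} ≤ E' := by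
            intro h
            exact hvE (by simpa [hE'def] using (Submodule.span_singleton_le_iff_mem _ _).mp h)
          obtain ⟨W₀, hW₀⟩ := Finset.card_eq_one.mp ((hS'pts _ hP₀).2 hP₀E')
          obtain ⟨hW₀f, hW₀uniq⟩ := Finset.eq_singleton_iff_unique_mem.mp hW₀
          have hW₀S' : W₀ ∈ S' := (Finset.mem_filter.mp hW₀f).1
          have hvW₀ : (⟨v, hvW'⟩ : W') ∈ W₀ :=
            (Submodule.span_singleton_le_iff_mem _ _).mp (Finset.mem_filter.mp hW₀f).2
          refine ⟨W₀.map W'.subtype, Finset.eq_singleton_iff_unique_mem.mpr ⟨?_, ?_⟩⟩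
          · refine Finset.mem_filter.mpr ⟨Finset.mem_union_left _
              (Finset.mem_image.mpr ⟨W₀, hW₀S', rfl⟩), ?_⟩
            rw [hle]
            exact (hvmap v W₀).mpr ⟨hvW', hvW₀⟩
          · intro W hW
            obtain ⟨hWS, hPW⟩ := Finset.mem_filter.mp hW
            rw [hle] at hPW
            rcases Finset.mem_union.mp hWS with hWS | hWS
            · obtain ⟨W₁, hW₁, rfl⟩ := Finset.mem_image.mp hWS
              obtain ⟨hv', hmem⟩ := (hvmap v W₁).mp hPW
              have hW₁W₀ : W₁ = W₀ := by
                apply hW₀uniq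
                exact Finset.mem_filter.mpr ⟨hW₁,
                  (Submodule.span_singleton_le_iff_mem _ _).mpr hmem⟩
              rw [hW₁W₀]
            · obtain ⟨w, _, rfl⟩ := Finset.mem_image.mp hWS
              exact absurd hPW (hnoL v hv0 hvW' w)
        · -- the point is outside W' : it lies on exactly one new line
          have hπv : π v ≠ 0 := fun h => hvW' ((hπ0 v).mp h)
          have hrepr : (b.repr (π v)) 0 • b 0 + (b.repr (π v)) 1 • b 1 = π v := by
            have h := b.sum_repr (π v)
            rwa [Fin.sum_univ_two] at h
          have holdmiss : ∀ W ∈ oldS, v ∉ W := by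
            intro W hW hvW
            obtain ⟨W₀, _, rfl⟩ := Finset.mem_image.mp hW
            exact hvW' (Submodule.map_subtype_le W' W₀ hvW)
          have hkey : ∃ w₀ : W', v ∈ L w₀ ∧ ∀ w : W', v ∈ L w → w = w₀ := by
            rcases zmod2_cases ((b.repr (π v)) 0) with h0 | h0 <;>
              rcases zmod2_cases ((b.repr (π v)) 1) with h1 | h1 <;>
                rw [h0, h1] at hrepr
            · -- (0,0) : impossible
              rw [zero_smul, zero_smul, add_zero] at hrepr
              exact absurd hrepr.symm hπv
            · -- (0,1) : π v = b 1
              rw [zero_smul, one_smul, zero_add] at hrepr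
              have hπveq : π v = b 1 := hrepr.symm
              obtain ⟨w₀, hw₀⟩ := hσ.2 (ρ v)
              refine ⟨w₀, (hmemL w₀ v).mpr (Or.inr (Or.inr (Or.inl ?_))), ?_⟩
              · rw [hw₀, ← hπveq]
                exact (hsum v).symm
              · intro w hw
                rcases (hmemL w v).mp hw with h | h | h | h
                · exact absurd h hv0
                · have hc : π v = b 0 := by rw [h, hπx]
                  rw [hc] at hπveq
                  exact absurd hπveq hb01
                · have hc : ρ v = σ w := by rw [h, hρy]
                  rw [← hw₀] at hc
                  exact (hσ.1 hc.symm)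
                · have hc : π v = b 0 + b 1 := by rw [h, hπz]
                  rw [hc] at hπveq
                  exact absurd hπveq.symm hb1sum
            · -- (1,0) : π v = b 0
              rw [one_smul, zero_smul, add_zero] at hrepr
              have hπveq : π v = b 0 := hrepr.symm
              refine ⟨ρ v, (hmemL (ρ v) v).mpr (Or.inr (Or.inl ?_)), ?_⟩
              · rw [← hπveq]
                exact (hsum v).symm
              · intro w hw
                rcases (hmemL w v).mp hw with h | h | h | h
                · exact absurd h hv0
                · have hc : ρ v = w := by rw [h, hρx]
                  exact hc.symm
                · have hc : π v = b 1 := by rw [h, hπy]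
                  rw [hc] at hπveq
                  exact absurd hπveq.symm hb01
                · have hc : π v = b 0 + b 1 := by rw [h, hπz]
                  rw [hc] at hπveq
                  exact absurd hπveq.symm hb0sum
            · -- (1,1) : π v = b 0 + b 1
              rw [one_smul, one_smul] at hrepr
              have hπveq : π v = b 0 + b 1 := hrepr.symm
              obtain ⟨w₀, hw₀⟩ := hτ.2 (ρ v)
              have hw₀' : w₀ + σ w₀ = ρ v := hw₀
              refine ⟨w₀, (hmemL w₀ v).mpr (Or.inr (Or.inr (Or.inr ?_))), ?_⟩
              · rw [← hsum v, hπveq, ← hw₀']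
                simp only [Submodule.coe_add]
                abel
              · intro w hw
                rcases (hmemL w v).mp hw with h | h | h | h
                · exact absurd h hv0
                · have hc : π v = b 0 := by rw [h, hπx]
                  rw [hc] at hπveq
                  exact absurd hπveq hb0sum
                · have hc : π v = b 1 := by rw [h, hπy]
                  rw [hc] at hπveq
                  exact absurd hπveq hb1sum
                · have hc : ρ v = w + σ w := by rw [h, hρz]
                  rw [← hw₀'] at hc
                  exact hτ.1 hc.symm
          obtain ⟨w₀, hvL, huniq⟩ := hkey
          refine ⟨L w₀, Finset.eq_singleton_iff_unique_mem.mpr ⟨?_, ?_⟩⟩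
          · exact Finset.mem_filter.mpr ⟨Finset.mem_union_right _
              (Finset.mem_image.mpr ⟨w₀, Finset.mem_univ _, rfl⟩), (hle _).mpr hvL⟩
          · intro W hW
            obtain ⟨hWS, hPW⟩ := Finset.mem_filter.mp hW
            rw [hle] at hPW
            rcases Finset.mem_union.mp hWS with hWS | hWS
            · exact absurd hPW (holdmiss _ hWS)
            · obtain ⟨w, _, rfl⟩ := Finset.mem_image.mp hWS
              rw [huniq w hPW]
    · -- cardinality
      have hdisj : Disjoint oldS newS := by
        rw [Finset.disjoint_left]
        rintro T hold hnew
        obtain ⟨W₀, _, rfl⟩ := Finset.mem_image.mp hold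
        obtain ⟨w, _, hLw⟩ := Finset.mem_image.mp hnew
        have hx : ((w : V) + ↑(b 0)) ∈ W₀.map W'.subtype := by
          rw [← hLw]
          exact Submodule.subset_span (Set.mem_insert _ _)
        have hxW' : ((w : V) + ↑(b 0)) ∈ W' := Submodule.map_subtype_le W' W₀ hx
        have h0 : π ((w : V) + ↑(b 0)) = 0 := (hπ0 _).mpr hxW'
        rw [hπx w] at h0
        exact hb0 h0
      have hLinj : Function.Injective L := by
        intro w w' h
        have hx : ((w : V) + ↑(b 0)) ∈ L w' := by
          rw [← h]
          exact Submodule.subset_span (Set.mem_insert _ _)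
        rcases (hmemL w' _).mp hx with h1 | h1 | h1 | h1
        · exfalso; apply hb0; rw [← hπx w, h1, map_zero]
        · have := congrArg ρ h1
          rw [hρx, hρx] at this
          exact this
        · have := congrArg π h1
          rw [hπx, hπy] at this
          exact absurd this hb01
        · have := congrArg π h1
          rw [hπx, hπz] at this
          exact absurd this hb0sum
      rw [Finset.card_union_of_disjoint hdisj, holdS, hnewS,
        Finset.card_image_of_injective _ (Submodule.map_injective_of_injective
          W'.injective_subtype),
        Finset.card_image_of_injective _ hLinj, Finset.card_univ, hS'card]
      have hcardW' : Fintype.card W' = 2 ^ m := by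
        rw [card_eq_pow_finrank (K := ZMod 2), ZMod.card, hW']
      rw [hcardW']
      have h8 : 8 ≤ 2 ^ m := by
        calc (8 : ℕ) = 2 ^ 3 := by norm_num
        _ ≤ 2 ^ m := Nat.pow_le_pow_right (by norm_num) hm3
      have hpow : 2 ^ (m + 2) - 8 = (2 ^ m - 8) + 3 * 2 ^ m := by
        have : 2 ^ (m + 2) = 2 ^ m * 4 := by
          rw [pow_succ, pow_succ]
          ring
        omega
      rw [hpow, Nat.add_mul_div_left _ _ (by norm_num : (0:ℕ) < 3)]

/-- Blokhuis–Brouwer: for odd `l ≥ 3` and any Fano subplane `E` (a 3-dimensional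
subspace of `F₂^l` viewed projectively) there is a partial spread of lines
partitioning the points of `PG(l-1,2)` outside `E`: every point not in `E` lies
on exactly one line of the partial spread, no point of `E` lies on any of its
lines, and the partial spread consists of exactly `(2^l - 8)/3` lines. -/
theorem blokhuis_brouwer_partial_spread (l : ℕ) (hl : 3 ≤ l) (hodd : Odd l)
    (E : Submodule (ZMod 2) (Fin l → ZMod 2)) (hE : finrank (ZMod 2) E = 3) :
    ∃ S : Finset (Submodule (ZMod 2) (Fin l → ZMod 2)),
      (∀ W ∈ S, finrank (ZMod 2) W = 2) ∧
      (∀ P : Submodule (ZMod 2) (Fin l → ZMod 2), finrank (ZMod 2) P = 1 →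
        (P ≤ E → ∀ W ∈ S, ¬ P ≤ W) ∧
        (¬ P ≤ E → (S.filter fun W => P ≤ W).card = 1)) ∧
      S.card = (2 ^ l - 8) / 3 := by
  exact key l hl hodd (Fin l → ZMod 2) (Module.finrank_fin_fun (ZMod 2)) E hE
end
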